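/- Let v_0, v_1, …, v_{k−1} be vectors in ℝ² satisfying ‖v_i‖ > 2·∑_{j=i+1}^{k−1} ‖v_j‖ for each i. Let p = ∑_i β_{p,i} v_i and q = ∑_i β_{q,i} v_i where β_{p,i}, β_{q,i} ∈ {0,1}, and let ℓ be the smallest index with β_{p,ℓ} ≠ β_{q,ℓ}. Then ‖p − q‖ > (1/2)·‖v_ℓ‖. -/

import Mathlib

theorem stmt_7 (k : ℕ) (v : Fin k → EuclideanSpace ℝ (Fin 2))
    (hv : ∀ i, 2 * ∑ j ∈ Finset.Ioi i, ‖v j‖ < ‖v i‖)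
    (βp βq : Fin k → ℝ)
    (hβp : ∀ i, βp i = 0 ∨ βp i = 1) (hβq : ∀ i, βq i = 0 ∨ βq i = 1)
    (ℓ : Fin k) (hne : βp ℓ ≠ βq ℓ) (hmin : ∀ j < ℓ, βp j = βq j) :
    ‖v ℓ‖ / 2 < ‖(∑ i, βp i • v i) - ∑ i, βq i • v i‖ := by
  set d : Fin k → ℝ := fun i => βp i - βq i with hd
  have hsum : (∑ i, βp i • v i) - ∑ i, βq i • v i = ∑ i, d i • v i := by
    rw [← Finset.sum_sub_distrib]
    refine Finset.sum_congr rfl fun i _ => ?_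
    rw [hd, sub_smul]
  rw [hsum]
  have hsplit : (Finset.univ : Finset (Fin k)) = insert ℓ (Finset.Iio ℓ ∪ Finset.Ioi ℓ) := by
    ext x
    simp [Finset.mem_insert, lt_or_gt_of_ne, eq_comm]
    rcases lt_trichotomy x ℓ with h | h | h <;> tauto
  have hnotmem : ℓ ∉ Finset.Iio ℓ ∪ Finset.Ioi ℓ := by simp
  rw [hsplit, Finset.sum_insert hnotmem,
    Finset.sum_union (Finset.disjoint_left.mpr (by
      intro a ha hb
      simp at ha hb
      exact absurd (ha.trans hb) (lt_irrefl _)))]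
  have hIio : ∑ i ∈ Finset.Iio ℓ, d i • v i = 0 := by
    refine Finset.sum_eq_zero fun i hi => ?_
    have : d i = 0 := by
      simp [hd, sub_eq_zero]
      exact hmin i (Finset.mem_Iio.mp hi)
    simp [this]
  rw [hIio, zero_add]
  have hdℓ : ‖d ℓ‖ = 1 := by
    rcases hβp ℓ with h1 | h1 <;> rcases hβq ℓ with h2 | h2 <;>
      simp [hd, h1, h2] at hne ⊢
  have htail : ‖∑ i ∈ Finset.Ioi ℓ, d i • v i‖ ≤ ∑ i ∈ Finset.Ioi ℓ, ‖v i‖ := by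
    refine (norm_sum_le _ _).trans (Finset.sum_le_sum fun i _ => ?_)
    rw [norm_smul]
    have : ‖d i‖ ≤ 1 := by
      rcases hβp i with h1 | h1 <;> rcases hβq i with h2 | h2 <;>
        simp [hd, h1, h2]
    calc ‖d i‖ * ‖v i‖ ≤ 1 * ‖v i‖ := by
          exact mul_le_mul_of_nonneg_right this (norm_nonneg _)
      _ = ‖v i‖ := one_mul _
  have hge : ‖v ℓ‖ - ∑ i ∈ Finset.Ioi ℓ, ‖v i‖ ≤ ‖d ℓ • v ℓ + ∑ i ∈ Finset.Ioi ℓ, d i • v i‖ := by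
    have h1 : ‖d ℓ • v ℓ‖ = ‖v ℓ‖ := by rw [norm_smul, hdℓ, one_mul]
    calc ‖v ℓ‖ - ∑ i ∈ Finset.Ioi ℓ, ‖v i‖
        ≤ ‖d ℓ • v ℓ‖ - ‖∑ i ∈ Finset.Ioi ℓ, d i • v i‖ := by
          rw [h1]; linarith
      _ ≤ ‖d ℓ • v ℓ + ∑ i ∈ Finset.Ioi ℓ, d i • v i‖ := by
          have h2 : ‖d ℓ • v ℓ‖ ≤ ‖d ℓ • v ℓ + ∑ i ∈ Finset.Ioi ℓ, d i • v i‖ +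
              ‖∑ i ∈ Finset.Ioi ℓ, d i • v i‖ := by
            calc ‖d ℓ • v ℓ‖ = ‖(d ℓ • v ℓ + ∑ i ∈ Finset.Ioi ℓ, d i • v i) -
                ∑ i ∈ Finset.Ioi ℓ, d i • v i‖ := by rw [add_sub_cancel_right]
              _ ≤ _ := norm_sub_le _ _
          linarith
  have := hv ℓ
  linarith
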